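/- Let X ∈ ℝ^{n×n} be a symmetric solution of the SCARE such that I_m + B̂ᵀ(X ⊗ I_{r−1})B̂ is invertible, and let γ > 0 be such that A_γ := A − γI_n is invertible and, with F̂ = −(I_m + B̂ᵀ(X ⊗ I_{r−1})B̂)⁻¹(XB + Âᵀ(X ⊗ I_{r−1})B̂)ᵀ and A_F = A + BF̂, the matrix A_F − γI_n is invertible. Write X_d = diag(X, X ⊗ I_{r−1}) ∈ ℝ^{rn×rn} (block diagonal) and assume I_{rn} + G₀ X_d is invertible. Then X solves the stochastic discrete-time algebraic Riccati equation X = E₀ᵀ X_d (I_{rn} + G₀ X_d)⁻¹ E₀ + H_γ (the SCARE is transformed, by the Cayley/Möbius transformation with parameter γ, into an SDARE). -/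

import Mathlib

open Matrix
open scoped Kronecker

private lemma mulCL {p s : Type*} [Fintype p] [DecidableEq p] {U V : Matrix p p ℝ} (h : U * V = 1)
    (M : Matrix p s ℝ) : U * (V * M) = M := by
  rw [← Matrix.mul_assoc, h, Matrix.one_mul]

private lemma frAdd {m₁ m₂ n : Type*} (A₁ B₁ : Matrix m₁ n ℝ) (A₂ B₂ : Matrix m₂ n ℝ) :
    fromRows A₁ A₂ + fromRows B₁ B₂ = fromRows (A₁ + B₁) (A₂ + B₂) := by
  ext (i | i) j <;> simp

private lemma frSmul {m₁ m₂ n : Type*} (c : ℝ) (A₁ : Matrix m₁ n ℝ) (A₂ : Matrix m₂ n ℝ) :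
    c • fromRows A₁ A₂ = fromRows (c • A₁) (c • A₂) := by
  ext (i | i) j <;> simp

set_option maxHeartbeats 2000000 in
private lemma scare_aux {N M L NR : Type}
    [Fintype N] [Fintype M] [Fintype L] [Fintype NR]
    [DecidableEq N] [DecidableEq M] [DecidableEq L] [DecidableEq NR]
    (A X Ag : Matrix N N ℝ) (Ah : Matrix NR N ℝ) (B : Matrix N M ℝ)
    (Bh : Matrix NR M ℝ) (C : Matrix L N ℝ) (W : Matrix NR NR ℝ)
    (γ q : ℝ) (hq : q * q = 2 * γ)
    (hXs : Xᵀ = X) (hWs : Wᵀ = W)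
    (Fh : Matrix M N ℝ) (Z : Matrix L M ℝ)
    (ai fi : Matrix N N ℝ) (Pi : Matrix M M ℝ) (ti : Matrix M M ℝ) (si : Matrix L L ℝ)
    (Ni : Matrix N N ℝ)
    (hAg : Ag = A - γ • 1)
    (Fg : Matrix N N ℝ) (hFg : Fg = A + B * Fh - γ • 1)
    (At : Matrix N N ℝ) (hAt : At = Ag + B * Zᵀ * C)
    (hZ : Z = C * ai * B)
    (hai1 : Ag * ai = 1) (hai2 : ai * Ag = 1)
    (hfi1 : Fg * fi = 1) (hfi2 : fi * Fg = 1)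
    (hP1 : (1 + Bhᵀ * W * Bh) * Pi = 1) (hP2 : Pi * (1 + Bhᵀ * W * Bh) = 1)
    (hti1 : (1 + Zᵀ * Z) * ti = 1) (hti2 : ti * (1 + Zᵀ * Z) = 1)
    (hsi1 : (1 + Z * Zᵀ) * si = 1) (hsi2 : si * (1 + Z * Zᵀ) = 1)
    (hNi1 : At * Ni = 1) (hNi2 : Ni * At = 1)
    (hFh : Fh = -(Pi * (X * B + Ahᵀ * W * Bh)ᵀ))
    (hscare : Aᵀ * X + X * A + Cᵀ * C + Ahᵀ * W * Ah -
      (X * B + Ahᵀ * W * Bh) * Pi * (Bᵀ * X + Bhᵀ * W * Ah) = 0)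
    (Hγ : Matrix N N ℝ) (hH : Hγ = (2 * γ) • (aiᵀ * Cᵀ * si * C * ai))
    (K : Matrix (N ⊕ NR) M ℝ) (hK : K = fromRows (q • (ai * B)) (Ah * ai * B - Bh))
    (G₀ : Matrix (N ⊕ NR) (N ⊕ NR) ℝ) (hG : G₀ = K * ti * Kᵀ)
    (E₀ : Matrix (N ⊕ NR) N ℝ)
    (hE : E₀ = fromRows (Ag + (2 * γ) • 1 + B * Zᵀ * C) (q • (Ah + Bh * Zᵀ * C)) * Ni)
    (Xd : Matrix (N ⊕ NR) (N ⊕ NR) ℝ) (hXd : Xd = fromBlocks X 0 0 W)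
    (Ri : Matrix (N ⊕ NR) (N ⊕ NR) ℝ)
    (hRi1 : (1 + G₀ * Xd) * Ri = 1) (hRi2 : Ri * (1 + G₀ * Xd) = 1) :
    X = E₀ᵀ * Xd * Ri * E₀ + Hγ := by
  -- transposed inverse facts
  have hai2T : Agᵀ * aiᵀ = 1 := by rw [← Matrix.transpose_mul, hai2, Matrix.transpose_one]
  have hai1T : aiᵀ * Agᵀ = 1 := by rw [← Matrix.transpose_mul, hai1, Matrix.transpose_one]
  have hNi2T : Atᵀ * Niᵀ = 1 := by rw [← Matrix.transpose_mul, hNi2, Matrix.transpose_one]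
  have hNi1T : Niᵀ * Atᵀ = 1 := by rw [← Matrix.transpose_mul, hNi1, Matrix.transpose_one]
  have hfi2T : Fgᵀ * fiᵀ = 1 := by rw [← Matrix.transpose_mul, hfi2, Matrix.transpose_one]
  have hfi1T : fiᵀ * Fgᵀ = 1 := by rw [← Matrix.transpose_mul, hfi1, Matrix.transpose_one]
  have hZT : Zᵀ = Bᵀ * aiᵀ * Cᵀ := by
    rw [hZ]; simp [Matrix.transpose_mul, Matrix.mul_assoc]
  -- fold facts
  have fZ : ∀ {s : Type} (Y : Matrix M s ℝ), C * (ai * (B * Y)) = Z * Y := by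
    intro s Y; rw [hZ]; simp [Matrix.mul_assoc]
  have fZT : ∀ {s : Type} (Y : Matrix L s ℝ), Bᵀ * (aiᵀ * (Cᵀ * Y)) = Zᵀ * Y := by
    intro s Y; rw [hZT]; simp [Matrix.mul_assoc]
  -- SCARE in moved form
  have hscare' : Aᵀ * X + X * A + Cᵀ * C + Ahᵀ * W * Ah =
      (X * B + Ahᵀ * W * Bh) * Pi * (Bᵀ * X + Bhᵀ * W * Ah) := sub_eq_zero.mp hscare
  have hSt : (X * B + Ahᵀ * W * Bh)ᵀ = Bᵀ * X + Bhᵀ * W * Ah := by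
    simp [Matrix.transpose_add, Matrix.transpose_mul, hXs, hWs, Matrix.mul_assoc]
  have hFh0 : Fh + Pi * (Bᵀ * X + Bhᵀ * W * Ah) = 0 := by
    rw [hFh, hSt, neg_add_cancel]
  have hPFh : (1 + Bhᵀ * W * Bh) * Fh = -(Bᵀ * X + Bhᵀ * W * Ah) := by
    rw [hFh, hSt, Matrix.mul_neg, mulCL hP1]
  -- Lyapunov-type core identity
  have hL : (Aᵀ * X + X * A + Cᵀ * C + Ahᵀ * W * Ah) +
      (X * (B * Fh) + Ahᵀ * (W * (Bh * Fh))) = 0 := by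
    rw [← sub_eq_zero]
    calc (Aᵀ * X + X * A + Cᵀ * C + Ahᵀ * W * Ah) +
          (X * (B * Fh) + Ahᵀ * (W * (Bh * Fh))) - 0
        = (Aᵀ * X + X * A + Cᵀ * C + Ahᵀ * W * Ah -
            (X * B + Ahᵀ * W * Bh) * Pi * (Bᵀ * X + Bhᵀ * W * Ah)) +
          (X * B + Ahᵀ * W * Bh) * (Fh + Pi * (Bᵀ * X + Bhᵀ * W * Ah)) := by
          simp only [Matrix.mul_add, Matrix.add_mul, Matrix.mul_sub, Matrix.sub_mul, Matrix.transpose_mul, Matrix.transpose_add, Matrix.transpose_sub, Matrix.transpose_smul, Matrix.transpose_one, Matrix.transpose_transpose, Matrix.transpose_neg, Matrix.neg_mul, Matrix.mul_neg, smul_neg, neg_smul, neg_neg, Matrix.smul_mul, Matrix.mul_smul, smul_mul_assoc, mul_smul_comm, smul_smul, smul_add, smul_sub, Matrix.mul_one, Matrix.one_mul, Matrix.mul_assoc, sub_zero]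
          try module
      _ = 0 := by rw [hscare, hFh0, Matrix.mul_zero, add_zero]
  have hCor : Bhᵀ * (W * (Ah + Bh * Fh)) = -(Bᵀ * X) - Fh := by
    rw [← sub_eq_zero]
    have h0 : (1 + Bhᵀ * W * Bh) * Fh - (-(Bᵀ * X + Bhᵀ * W * Ah)) = 0 :=
      sub_eq_zero.mpr hPFh
    calc Bhᵀ * (W * (Ah + Bh * Fh)) - (-(Bᵀ * X) - Fh)
        = (1 + Bhᵀ * W * Bh) * Fh - (-(Bᵀ * X + Bhᵀ * W * Ah)) := by
          simp only [Matrix.mul_add, Matrix.add_mul, Matrix.mul_sub, Matrix.sub_mul, Matrix.transpose_mul, Matrix.transpose_add, Matrix.transpose_sub, Matrix.transpose_smul, Matrix.transpose_one, Matrix.transpose_transpose, Matrix.transpose_neg, Matrix.neg_mul, Matrix.mul_neg, smul_neg, neg_smul, neg_neg, Matrix.smul_mul, Matrix.mul_smul, smul_mul_assoc, mul_smul_comm, smul_smul, smul_add, smul_sub, Matrix.mul_one, Matrix.one_mul, Matrix.mul_assoc]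
          try module
      _ = 0 := h0
  have hCorZ : Bhᵀ * (W * (Ah + Bh * Fh)) - (-(Bᵀ * X) - Fh) = 0 := sub_eq_zero.mpr hCor
  -- the closed-loop Cayley factor
  set Ec : Matrix (N ⊕ NR) N ℝ :=
    fromRows (1 + (2 * γ) • fi) (q • ((Ah + Bh * Fh) * fi)) with hEc
  have stage1 : Kᵀ * (Xd * Ec) =
      (q • (ai * B))ᵀ * (X * (1 + (2 * γ) • fi)) +
      (Ah * ai * B - Bh)ᵀ * (W * (q • ((Ah + Bh * Fh) * fi))) := by
    rw [hK, hXd, hEc]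
    simp only [transpose_fromRows, fromBlocks_mul_fromRows, Matrix.zero_mul, add_zero,
      zero_add, fromCols_mul_fromRows]
  have f2 : X * Fg + (2 * γ) • X + Ahᵀ * (W * (Ah + Bh * Fh)) + Agᵀ * X + Cᵀ * C = 0 := by
    rw [hFg, hAg]
    calc X * (A + B * Fh - γ • 1) + (2 * γ) • X + Ahᵀ * (W * (Ah + Bh * Fh)) +
          (A - γ • 1)ᵀ * X + Cᵀ * C
        = (Aᵀ * X + X * A + Cᵀ * C + Ahᵀ * W * Ah) +
          (X * (B * Fh) + Ahᵀ * (W * (Bh * Fh))) := by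
          simp only [Matrix.mul_add, Matrix.add_mul, Matrix.mul_sub, Matrix.sub_mul, Matrix.transpose_mul, Matrix.transpose_add, Matrix.transpose_sub, Matrix.transpose_smul, Matrix.transpose_one, Matrix.transpose_transpose, Matrix.transpose_neg, Matrix.neg_mul, Matrix.mul_neg, smul_neg, neg_smul, neg_neg, Matrix.smul_mul, Matrix.mul_smul, smul_mul_assoc, mul_smul_comm, smul_smul, smul_add, smul_sub, Matrix.mul_one, Matrix.one_mul, Matrix.mul_assoc]
          try module
      _ = 0 := hL
  have f3 : Bᵀ * (aiᵀ * X) - Bᵀ * (aiᵀ * (X * (Fg * fi))) = 0 := by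
    rw [hfi1, Matrix.mul_one, sub_self]
  have f4 : Bᵀ * (X * fi) - Bᵀ * (aiᵀ * (Agᵀ * (X * fi))) = 0 := by
    rw [mulCL hai1T, sub_self]
  have stage2 : (q • (ai * B))ᵀ * (X * (1 + (2 * γ) • fi)) +
      (Ah * ai * B - Bh)ᵀ * (W * (q • ((Ah + Bh * Fh) * fi))) =
      q • ((Fh - Zᵀ * C) * fi) := by
    have f1 : Bhᵀ * (W * ((Ah + Bh * Fh) * fi)) - (-(Bᵀ * X) - Fh) * fi = 0 := by
      rw [sub_eq_zero]
      have h := congrArg (fun Y => Y * fi) hCor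
      simpa only [Matrix.mul_assoc] using h
    rw [← sub_eq_zero, hZT]
    calc (q • (ai * B))ᵀ * (X * (1 + (2 * γ) • fi)) +
          (Ah * ai * B - Bh)ᵀ * (W * (q • ((Ah + Bh * Fh) * fi))) -
          q • ((Fh - Bᵀ * aiᵀ * Cᵀ * C) * fi)
        = q • (Bᵀ * (aiᵀ * ((X * Fg + (2 * γ) • X + Ahᵀ * (W * (Ah + Bh * Fh)) +
            Agᵀ * X + Cᵀ * C) * fi)))
          - q • (Bhᵀ * (W * ((Ah + Bh * Fh) * fi)) - (-(Bᵀ * X) - Fh) * fi)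
          + q • (Bᵀ * (aiᵀ * X) - Bᵀ * (aiᵀ * (X * (Fg * fi))))
          + q • (Bᵀ * (X * fi) - Bᵀ * (aiᵀ * (Agᵀ * (X * fi)))) := by
          simp only [Matrix.mul_add, Matrix.add_mul, Matrix.mul_sub, Matrix.sub_mul, Matrix.transpose_mul, Matrix.transpose_add, Matrix.transpose_sub, Matrix.transpose_smul, Matrix.transpose_one, Matrix.transpose_transpose, Matrix.transpose_neg, Matrix.neg_mul, Matrix.mul_neg, smul_neg, neg_smul, neg_neg, Matrix.smul_mul, Matrix.mul_smul, smul_mul_assoc, mul_smul_comm, smul_smul, smul_add, smul_sub, Matrix.mul_one, Matrix.one_mul, Matrix.mul_assoc, hXs, hWs]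
          try module
      _ = 0 := by rw [f2, f1, f3, f4]; simp
  have hKXE : Kᵀ * (Xd * Ec) = q • ((Fh - Zᵀ * C) * fi) := stage1.trans stage2
  -- v and the two block identities
  set v : Matrix M N ℝ := ti * ((Fh - Zᵀ * C) * fi) with hv
  have g1 : At * (ai * (B * ti)) = B := by
    rw [hAt, ← sub_eq_zero]
    calc (Ag + B * Zᵀ * C) * (ai * (B * ti)) - B
        = B * ((1 + Zᵀ * Z) * ti) - B := by
          simp only [Matrix.mul_add, Matrix.add_mul, Matrix.mul_sub, Matrix.sub_mul, Matrix.transpose_mul, Matrix.transpose_add, Matrix.transpose_sub, Matrix.transpose_smul, Matrix.transpose_one, Matrix.transpose_transpose, Matrix.transpose_neg, Matrix.neg_mul, Matrix.mul_neg, smul_neg, neg_smul, neg_neg, Matrix.smul_mul, Matrix.mul_smul, smul_mul_assoc, mul_smul_comm, smul_smul, smul_add, smul_sub, Matrix.mul_one, Matrix.one_mul, Matrix.mul_assoc, mulCL hai1, fZ]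
      _ = 0 := by rw [hti1, Matrix.mul_one, sub_self]
  have NiB : Ni * B = ai * (B * ti) := by
    conv_lhs => rw [← g1]
    rw [mulCL hNi2]
  have cNiB : ∀ {s : Type} (Y : Matrix M s ℝ), Ni * (B * Y) = ai * (B * (ti * Y)) := by
    intro s Y; rw [← Matrix.mul_assoc, NiB]; simp only [Matrix.mul_assoc]
  have fFA : Fg - At = B * Fh - B * Zᵀ * C := by rw [hFg, hAt, hAg]; module
  have hetop : Ni = fi + ai * (B * v) := by
    have h1 : Ni * ((B * Fh - B * Zᵀ * C) * fi) = ai * (B * v) := by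
      rw [hv]
      simp only [Matrix.sub_mul, Matrix.mul_sub, Matrix.mul_assoc, cNiB]
      try simp only [← Matrix.mul_assoc]
      try simp only [Matrix.mul_assoc]
      try rw [← Matrix.mul_sub, ← Matrix.mul_sub, ← Matrix.mul_sub]
    have h2 : Ni - fi = Ni * ((Fg - At) * fi) := by
      simp only [Matrix.sub_mul, Matrix.mul_sub, Matrix.mul_assoc, mulCL hNi2, hfi1,
        Matrix.mul_one]
    rw [← sub_eq_zero]
    calc Ni - (fi + ai * (B * v)) = (Ni - fi) - ai * (B * v) := by module
      _ = Ni * ((Fg - At) * fi) - ai * (B * v) := by rw [h2]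
      _ = Ni * ((B * Fh - B * Zᵀ * C) * fi) - ai * (B * v) := by rw [fFA]
      _ = 0 := by rw [h1, sub_self]
  have fe : Ni - (fi + ai * (B * v)) = 0 := sub_eq_zero.mpr hetop
  have ftv2 : (Fh - Zᵀ * C) * fi - (1 + Zᵀ * Z) * v = 0 := by
    rw [hv, mulCL hti1, sub_self]
  have hebot : (Ah + Bh * Zᵀ * C) * Ni = (Ah + Bh * Fh) * fi + (Ah * ai * B - Bh) * v := by
    rw [← sub_eq_zero]
    calc (Ah + Bh * Zᵀ * C) * Ni - ((Ah + Bh * Fh) * fi + (Ah * ai * B - Bh) * v)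
        = (Ah + Bh * Zᵀ * C) * (Ni - (fi + ai * (B * v))) -
          Bh * ((Fh - Zᵀ * C) * fi - (1 + Zᵀ * Z) * v) := by
          simp only [Matrix.mul_add, Matrix.add_mul, Matrix.mul_sub, Matrix.sub_mul, Matrix.transpose_mul, Matrix.transpose_add, Matrix.transpose_sub, Matrix.transpose_smul, Matrix.transpose_one, Matrix.transpose_transpose, Matrix.transpose_neg, Matrix.neg_mul, Matrix.mul_neg, smul_neg, neg_smul, neg_neg, Matrix.smul_mul, Matrix.mul_smul, smul_mul_assoc, mul_smul_comm, smul_smul, smul_add, smul_sub, Matrix.mul_one, Matrix.one_mul, Matrix.mul_assoc, fZ]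
          try module
      _ = 0 := by rw [fe, ftv2]; simp
  -- E₀ in closed form and the key factorization
  have hE₀' : E₀ = fromRows (1 + (2 * γ) • Ni) (q • ((Ah + Bh * Zᵀ * C) * Ni)) := by
    have h : Ag + (2 * γ) • 1 + B * Zᵀ * C = At + (2 * γ) • 1 := by rw [hAt]; module
    rw [hE, fromRows_mul, h, fromRows_ext_iff]
    constructor
    · rw [Matrix.add_mul, hNi1, Matrix.smul_mul, Matrix.one_mul]
    · rw [Matrix.smul_mul]
  have hE₀Ec : E₀ = Ec + q • (K * v) := by
    rw [hE₀', hEc, hK, fromRows_mul, frSmul, frAdd, fromRows_ext_iff]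
    constructor
    · rw [hetop]
      simp only [Matrix.mul_add, Matrix.add_mul, Matrix.mul_sub, Matrix.sub_mul, Matrix.transpose_mul, Matrix.transpose_add, Matrix.transpose_sub, Matrix.transpose_smul, Matrix.transpose_one, Matrix.transpose_transpose, Matrix.transpose_neg, Matrix.neg_mul, Matrix.mul_neg, smul_neg, neg_smul, neg_neg, Matrix.smul_mul, Matrix.mul_smul, smul_mul_assoc, mul_smul_comm, smul_smul, smul_add, smul_sub, Matrix.mul_one, Matrix.one_mul, Matrix.mul_assoc, hq]
      try module
    · rw [hebot]
      simp only [Matrix.mul_add, Matrix.add_mul, Matrix.mul_sub, Matrix.sub_mul, Matrix.transpose_mul, Matrix.transpose_add, Matrix.transpose_sub, Matrix.transpose_smul, Matrix.transpose_one, Matrix.transpose_transpose, Matrix.transpose_neg, Matrix.neg_mul, Matrix.mul_neg, smul_neg, neg_smul, neg_neg, Matrix.smul_mul, Matrix.mul_smul, smul_mul_assoc, mul_smul_comm, smul_smul, smul_add, smul_sub, Matrix.mul_one, Matrix.one_mul, Matrix.mul_assoc]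
      try module
  have hE1 : E₀ = (1 + G₀ * Xd) * Ec := by
    have h : (1 + G₀ * Xd) * Ec = Ec + q • (K * v) := by
      calc (1 + G₀ * Xd) * Ec = Ec + K * (ti * (Kᵀ * (Xd * Ec))) := by
            rw [hG]; simp only [Matrix.add_mul, Matrix.one_mul, Matrix.mul_assoc]
        _ = Ec + q • (K * v) := by
            rw [hKXE, hv]; simp only [Matrix.mul_smul]
    rw [hE₀Ec, h]
  have hRiE : Ri * E₀ = Ec := by rw [hE1, mulCL hRi2]
  -- step 2 : E₀ᵀ Xd Ec + Hγ = X
  have hEXE : E₀ᵀ * (Xd * Ec) =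
      (1 + (2 * γ) • Ni)ᵀ * (X * (1 + (2 * γ) • fi)) +
      (q • ((Ah + Bh * Zᵀ * C) * Ni))ᵀ * (W * (q • ((Ah + Bh * Fh) * fi))) := by
    rw [hE₀', hEc, hXd]
    simp only [transpose_fromRows, fromBlocks_mul_fromRows, Matrix.zero_mul, add_zero,
      zero_add, fromCols_mul_fromRows]
  have faiFg : C * (ai * Fg) = C + Z * Fh := by
    have h : Fg = Ag + B * Fh := by rw [hFg, hAg]; module
    rw [h]
    simp only [Matrix.mul_add, Matrix.add_mul, Matrix.mul_sub, Matrix.sub_mul, Matrix.transpose_mul, Matrix.transpose_add, Matrix.transpose_sub, Matrix.transpose_smul, Matrix.transpose_one, Matrix.transpose_transpose, Matrix.transpose_neg, Matrix.neg_mul, Matrix.mul_neg, smul_neg, neg_smul, neg_neg, Matrix.smul_mul, Matrix.mul_smul, smul_mul_assoc, mul_smul_comm, smul_smul, smul_add, smul_sub, Matrix.mul_one, Matrix.one_mul, Matrix.mul_assoc, hai2, fZ]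
  have s5 : Atᵀ * (Hγ * Fg) = (2 * γ) • (Cᵀ * (C + Z * Fh)) := by
    have z5a : (1 + Z * Zᵀ) * (si * (C * (ai * Fg))) - C * (ai * Fg) = 0 := by
      rw [mulCL hsi1, sub_self]
    have z5b : C * (ai * Fg) - (C + Z * Fh) = 0 := sub_eq_zero.mpr faiFg
    rw [← sub_eq_zero]
    calc Atᵀ * (Hγ * Fg) - (2 * γ) • (Cᵀ * (C + Z * Fh))
        = (2 * γ) • (Cᵀ * ((1 + Z * Zᵀ) * (si * (C * (ai * Fg))) - C * (ai * Fg))) +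
          (2 * γ) • (Cᵀ * (C * (ai * Fg) - (C + Z * Fh))) := by
          rw [hH, hAt]
          simp only [Matrix.mul_add, Matrix.add_mul, Matrix.mul_sub, Matrix.sub_mul, Matrix.transpose_mul, Matrix.transpose_add, Matrix.transpose_sub, Matrix.transpose_smul, Matrix.transpose_one, Matrix.transpose_transpose, Matrix.transpose_neg, Matrix.neg_mul, Matrix.mul_neg, smul_neg, neg_smul, neg_neg, Matrix.smul_mul, Matrix.mul_smul, smul_mul_assoc, mul_smul_comm, smul_smul, smul_add, smul_sub, Matrix.mul_one, Matrix.one_mul, Matrix.mul_assoc, mulCL hai2T, fZT]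
          try module
      _ = 0 := by rw [z5a, z5b]; simp
  have d1 : Atᵀ * ((E₀ᵀ * (Xd * Ec)) * Fg) =
      (Atᵀ + (2 * γ) • 1) * (X * (Fg + (2 * γ) • 1)) +
      (2 * γ) • ((Ah + Bh * Zᵀ * C)ᵀ * (W * (Ah + Bh * Fh))) := by
    rw [hEXE]
    simp only [Matrix.mul_add, Matrix.add_mul, Matrix.mul_sub, Matrix.sub_mul, Matrix.transpose_mul, Matrix.transpose_add, Matrix.transpose_sub, Matrix.transpose_smul, Matrix.transpose_one, Matrix.transpose_transpose, Matrix.transpose_neg, Matrix.neg_mul, Matrix.mul_neg, smul_neg, neg_smul, neg_neg, Matrix.smul_mul, Matrix.mul_smul, smul_mul_assoc, mul_smul_comm, smul_smul, smul_add, smul_sub, Matrix.mul_one, Matrix.one_mul, Matrix.mul_assoc, hq, mulCL hNi2T, hfi2]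
    try module
  have d2 : Atᵀ * (X * Fg) - (2 * γ) • (Cᵀ * (C + Z * Fh)) -
      ((Atᵀ + (2 * γ) • 1) * (X * (Fg + (2 * γ) • 1)) +
       (2 * γ) • ((Ah + Bh * Zᵀ * C)ᵀ * (W * (Ah + Bh * Fh)))) = 0 := by
    calc Atᵀ * (X * Fg) - (2 * γ) • (Cᵀ * (C + Z * Fh)) -
        ((Atᵀ + (2 * γ) • 1) * (X * (Fg + (2 * γ) • 1)) +
         (2 * γ) • ((Ah + Bh * Zᵀ * C)ᵀ * (W * (Ah + Bh * Fh))))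
        = (-(2 * γ)) • (((Aᵀ * X + X * A + Cᵀ * C + Ahᵀ * W * Ah) +
            (X * (B * Fh) + Ahᵀ * (W * (Bh * Fh)))) +
            Cᵀ * (Z * (Bhᵀ * (W * (Ah + Bh * Fh)) - (-(Bᵀ * X) - Fh)))) := by
          rw [hAt, hFg, hAg]
          simp only [Matrix.mul_add, Matrix.add_mul, Matrix.mul_sub, Matrix.sub_mul, Matrix.transpose_mul, Matrix.transpose_add, Matrix.transpose_sub, Matrix.transpose_smul, Matrix.transpose_one, Matrix.transpose_transpose, Matrix.transpose_neg, Matrix.neg_mul, Matrix.mul_neg, smul_neg, neg_smul, neg_neg, Matrix.smul_mul, Matrix.mul_smul, smul_mul_assoc, mul_smul_comm, smul_smul, smul_add, smul_sub, Matrix.mul_one, Matrix.one_mul, Matrix.mul_assoc]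
          try module
      _ = 0 := by rw [hL, hCorZ]; simp
  have hfinal0 : X - Hγ - E₀ᵀ * (Xd * Ec) = 0 := by
    have hD : Atᵀ * ((X - Hγ - E₀ᵀ * (Xd * Ec)) * Fg) = 0 := by
      calc Atᵀ * ((X - Hγ - E₀ᵀ * (Xd * Ec)) * Fg)
          = Atᵀ * (X * Fg) - Atᵀ * (Hγ * Fg) - Atᵀ * ((E₀ᵀ * (Xd * Ec)) * Fg) := by
            simp only [Matrix.sub_mul, Matrix.mul_sub]
        _ = 0 := by rw [s5, d1]; exact d2
    have h : X - Hγ - E₀ᵀ * (Xd * Ec) =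
        Niᵀ * (Atᵀ * ((X - Hγ - E₀ᵀ * (Xd * Ec)) * Fg)) * fi := by
      rw [mulCL hNi1T, Matrix.mul_assoc, hfi1, Matrix.mul_one]
    rw [h, hD]; simp
  have hg : E₀ᵀ * Xd * Ri * E₀ = E₀ᵀ * (Xd * Ec) := by
    rw [Matrix.mul_assoc (E₀ᵀ * Xd) Ri E₀, hRiE, Matrix.mul_assoc]
  rw [hg, ← sub_eq_zero]
  calc X - (E₀ᵀ * (Xd * Ec) + Hγ) = X - Hγ - E₀ᵀ * (Xd * Ec) := by module
    _ = 0 := hfinal0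

/-- The SCARE is transformed, by the Cayley/Möbius transformation with parameter γ,
into an SDARE: a symmetric solution X of the SCARE satisfies
X = E₀ᵀ X_d (I + G₀ X_d)⁻¹ E₀ + H_γ, where X_d = diag(X, X ⊗ I_{r−1}).
Here `(r−1)n` is realized as `Fin n × Fin (r-1)`. -/
theorem stmt16 {n m l r : ℕ} (hn : 0 < n) (hm : 0 < m) (hl : 0 < l) (hr : 2 ≤ r)
    (A : Matrix (Fin n) (Fin n) ℝ)
    (Ah : Matrix (Fin n × Fin (r - 1)) (Fin n) ℝ)
    (B : Matrix (Fin n) (Fin m) ℝ)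
    (Bh : Matrix (Fin n × Fin (r - 1)) (Fin m) ℝ)
    (C : Matrix (Fin l) (Fin n) ℝ)
    (X : Matrix (Fin n) (Fin n) ℝ) (hX : Xᵀ = X)
    (hinv1 : IsUnit (1 + Bhᵀ * (X ⊗ₖ (1 : Matrix (Fin (r - 1)) (Fin (r - 1)) ℝ)) * Bh))
    (hscare : Aᵀ * X + X * A + Cᵀ * C +
        Ahᵀ * (X ⊗ₖ (1 : Matrix (Fin (r - 1)) (Fin (r - 1)) ℝ)) * Ah -
        (X * B + Ahᵀ * (X ⊗ₖ (1 : Matrix (Fin (r - 1)) (Fin (r - 1)) ℝ)) * Bh) *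
          (1 + Bhᵀ * (X ⊗ₖ (1 : Matrix (Fin (r - 1)) (Fin (r - 1)) ℝ)) * Bh)⁻¹ *
          (Bᵀ * X + Bhᵀ * (X ⊗ₖ (1 : Matrix (Fin (r - 1)) (Fin (r - 1)) ℝ)) * Ah) = 0)
    (γ : ℝ) (hγ : 0 < γ)
    (Aγ : Matrix (Fin n) (Fin n) ℝ) (hAγ : Aγ = A - γ • 1) (hAγu : IsUnit Aγ)
    (Fh : Matrix (Fin m) (Fin n) ℝ)
    (hFh : Fh = -((1 + Bhᵀ * (X ⊗ₖ (1 : Matrix (Fin (r - 1)) (Fin (r - 1)) ℝ)) * Bh)⁻¹ *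
        (X * B + Ahᵀ * (X ⊗ₖ (1 : Matrix (Fin (r - 1)) (Fin (r - 1)) ℝ)) * Bh)ᵀ))
    (hAFu : IsUnit (A + B * Fh - γ • 1))
    (Z : Matrix (Fin l) (Fin m) ℝ) (hZ : Z = C * Aγ⁻¹ * B)
    (Hγ : Matrix (Fin n) (Fin n) ℝ)
    (hHγ : Hγ = (2 * γ) • (Aγ⁻¹ᵀ * Cᵀ * (1 + Z * Zᵀ)⁻¹ * C * Aγ⁻¹))
    (K : Matrix (Fin n ⊕ Fin n × Fin (r - 1)) (Fin m) ℝ)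
    (hK : K = Matrix.fromRows (Real.sqrt (2 * γ) • (Aγ⁻¹ * B)) (Ah * Aγ⁻¹ * B - Bh))
    (G₀ : Matrix (Fin n ⊕ Fin n × Fin (r - 1)) (Fin n ⊕ Fin n × Fin (r - 1)) ℝ)
    (hG₀ : G₀ = K * (1 + Zᵀ * Z)⁻¹ * Kᵀ)
    (E₀ : Matrix (Fin n ⊕ Fin n × Fin (r - 1)) (Fin n) ℝ)
    (hE₀ : E₀ = Matrix.fromRows (Aγ + (2 * γ) • 1 + B * Zᵀ * C)
        (Real.sqrt (2 * γ) • (Ah + Bh * Zᵀ * C)) * (1 + Aγ⁻¹ * B * Zᵀ * C)⁻¹ * Aγ⁻¹)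
    (Xd : Matrix (Fin n ⊕ Fin n × Fin (r - 1)) (Fin n ⊕ Fin n × Fin (r - 1)) ℝ)
    (hXd : Xd = Matrix.fromBlocks X 0 0
        (X ⊗ₖ (1 : Matrix (Fin (r - 1)) (Fin (r - 1)) ℝ)))
    (hinv2 : IsUnit (1 + G₀ * Xd)) :
    X = E₀ᵀ * Xd * (1 + G₀ * Xd)⁻¹ * E₀ + Hγ := by
  have h2γ : (0:ℝ) ≤ 2 * γ := by positivity
  have hq : Real.sqrt (2*γ) * Real.sqrt (2*γ) = 2*γ := Real.mul_self_sqrt h2γ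
  have hWs : (X ⊗ₖ (1 : Matrix (Fin (r-1)) (Fin (r-1)) ℝ))ᵀ
      = X ⊗ₖ (1 : Matrix (Fin (r-1)) (Fin (r-1)) ℝ) := by
    rw [← Matrix.kroneckerMap_transpose, hX, Matrix.transpose_one]
  have dAγ : IsUnit Aγ.det := (Matrix.isUnit_iff_isUnit_det _).mp hAγu
  have dAF : IsUnit (A + B * Fh - γ • 1).det := (Matrix.isUnit_iff_isUnit_det _).mp hAFu
  have dP : IsUnit (1 + Bhᵀ * (X ⊗ₖ (1 : Matrix (Fin (r-1)) (Fin (r-1)) ℝ)) * Bh).det :=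
    (Matrix.isUnit_iff_isUnit_det _).mp hinv1
  have dR : IsUnit (1 + G₀ * Xd).det := (Matrix.isUnit_iff_isUnit_det _).mp hinv2
  have pZTZ : (Zᵀ * Z).PosSemidef := by
    have := Matrix.posSemidef_conjTranspose_mul_self Z
    rwa [Matrix.conjTranspose_eq_transpose_of_trivial] at this
  have pZZT : (Z * Zᵀ).PosSemidef := by
    have := Matrix.posSemidef_self_mul_conjTranspose Z
    rwa [Matrix.conjTranspose_eq_transpose_of_trivial] at this
  have dT : IsUnit (1 + Zᵀ * Z).det := (Matrix.isUnit_iff_isUnit_det _).mp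
    (Matrix.PosDef.add_posSemidef Matrix.PosDef.one pZTZ).isUnit
  have dS : IsUnit (1 + Z * Zᵀ).det := (Matrix.isUnit_iff_isUnit_det _).mp
    (Matrix.PosDef.add_posSemidef Matrix.PosDef.one pZZT).isUnit
  have dN : IsUnit (1 + Aγ⁻¹ * B * Zᵀ * C).det := by
    have h1 : (1 + Aγ⁻¹ * B * Zᵀ * C).det = (1 + C * (Aγ⁻¹ * B * Zᵀ)).det :=
      Matrix.det_one_add_mul_comm _ _
    have h2 : 1 + C * (Aγ⁻¹ * B * Zᵀ) = 1 + Z * Zᵀ := by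
      rw [hZ]; simp [Matrix.mul_assoc]
    rw [h1, h2]; exact dS
  have hAtfac : Aγ * (1 + Aγ⁻¹ * B * Zᵀ * C) = Aγ + B * Zᵀ * C := by
    simp only [Matrix.mul_add, Matrix.mul_one, Matrix.mul_assoc,
      Matrix.mul_nonsing_inv_cancel_left _ _ dAγ]
  have hNi1 : (Aγ + B * Zᵀ * C) * ((1 + Aγ⁻¹ * B * Zᵀ * C)⁻¹ * Aγ⁻¹) = 1 := by
    rw [← hAtfac, Matrix.mul_assoc, Matrix.mul_nonsing_inv_cancel_left _ _ dN,
      Matrix.mul_nonsing_inv _ dAγ]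
  have hNi2 : ((1 + Aγ⁻¹ * B * Zᵀ * C)⁻¹ * Aγ⁻¹) * (Aγ + B * Zᵀ * C) = 1 := by
    rw [← hAtfac, Matrix.mul_assoc, Matrix.nonsing_inv_mul_cancel_left _ _ dAγ,
      Matrix.nonsing_inv_mul _ dN]
  have hE₀' : E₀ = Matrix.fromRows (Aγ + (2 * γ) • 1 + B * Zᵀ * C)
      (Real.sqrt (2 * γ) • (Ah + Bh * Zᵀ * C)) * ((1 + Aγ⁻¹ * B * Zᵀ * C)⁻¹ * Aγ⁻¹) := by
    rw [hE₀, Matrix.mul_assoc]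
  exact scare_aux A X Aγ Ah B Bh C (X ⊗ₖ (1 : Matrix (Fin (r-1)) (Fin (r-1)) ℝ)) γ
    (Real.sqrt (2*γ)) hq hX hWs Fh Z Aγ⁻¹ (A + B * Fh - γ • 1)⁻¹
    (1 + Bhᵀ * (X ⊗ₖ (1 : Matrix (Fin (r-1)) (Fin (r-1)) ℝ)) * Bh)⁻¹
    (1 + Zᵀ * Z)⁻¹ (1 + Z * Zᵀ)⁻¹ ((1 + Aγ⁻¹ * B * Zᵀ * C)⁻¹ * Aγ⁻¹)
    hAγ (A + B * Fh - γ • 1) rfl (Aγ + B * Zᵀ * C) rfl hZ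
    (Matrix.mul_nonsing_inv _ dAγ) (Matrix.nonsing_inv_mul _ dAγ)
    (Matrix.mul_nonsing_inv _ dAF) (Matrix.nonsing_inv_mul _ dAF)
    (Matrix.mul_nonsing_inv _ dP) (Matrix.nonsing_inv_mul _ dP)
    (Matrix.mul_nonsing_inv _ dT) (Matrix.nonsing_inv_mul _ dT)
    (Matrix.mul_nonsing_inv _ dS) (Matrix.nonsing_inv_mul _ dS)
    hNi1 hNi2 hFh hscare Hγ hHγ K hK G₀ hG₀ E₀ hE₀' Xd hXd
    (1 + G₀ * Xd)⁻¹ (Matrix.mul_nonsing_inv _ dR) (Matrix.nonsing_inv_mul _ dR)
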